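/- Let n ≥ 1 be an integer and let ζ = exp(πi/n) ∈ ℂ. Then −(1/2)·(1/(2n)) Σ_{j=1}^{2n−1} ζ^{(n−1)j}/(1−ζ^{−j})² + (1/8)·(1/(4n))·( Σ_{j=1}^{2n−1} (1+ζ^{−j})(1+ζ^{j})/((1−ζ^{−j})(1−ζ^{j})) + 2n ) = 0. -/

import Mathlib

open Finset

private lemma geom_zero' (x : ℂ) (M : ℕ) (hx : x ≠ 1) (hxM : x ^ M = 1) :
    ∑ k ∈ range M, x ^ k = 0 := by
  have h := geom_sum_mul x M
  rw [hxM, sub_self] at h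
  exact (mul_eq_zero.mp h).resolve_right (sub_ne_zero.mpr hx)

private lemma aux_gs' (x : ℂ) (M : ℕ) :
    (x - 1) * ∑ k ∈ range M, (k : ℂ) * x ^ k
      = ((M : ℂ) - 1) * x ^ M - (∑ k ∈ range M, x ^ k) + 1 := by
  induction M with
  | zero => simp
  | succ M ih =>
    rw [Finset.sum_range_succ, Finset.sum_range_succ]
    push_cast
    linear_combination ih

private lemma gs_eq' (x : ℂ) (M : ℕ) (hx : x ≠ 1) (hxM : x ^ M = 1) :
    (x - 1) * ∑ k ∈ range M, (k : ℂ) * x ^ k = M := by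
  rw [aux_gs', hxM, geom_zero' x M hx hxM]; ring

private lemma lin_sum' (M : ℕ) : ∑ k ∈ range M, (k:ℂ) = M * (M-1) / 2 := by
  induction M with
  | zero => simp
  | succ M ih =>
    rw [Finset.sum_range_succ, ih]
    push_cast
    ring

private lemma sq_sum' (M : ℕ) : ∑ k ∈ range M, (k:ℂ)^2 = M * (M-1) * (2*M-1) / 6 := by
  induction M with
  | zero => simp
  | succ M ih =>
    rw [Finset.sum_range_succ, ih]
    push_cast
    ring

private lemma csum' (N s : ℕ) (ζ : ℂ) (h : IsPrimitiveRoot ζ N) :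
    ∑ j ∈ range N, (ζ ^ s) ^ j = if N ∣ s then (N : ℂ) else 0 := by
  by_cases hd : N ∣ s
  · rw [if_pos hd]
    have : ζ ^ s = 1 := by
      obtain ⟨c, rfl⟩ := hd
      rw [pow_mul, h.pow_eq_one, one_pow]
    simp [this]
  · rw [if_neg hd]
    refine geom_zero' _ _ ?_ ?_
    · intro h1
      exact hd ((h.pow_eq_one_iff_dvd s).mp h1)
    · rw [← pow_mul, mul_comm, pow_mul, h.pow_eq_one, one_pow]

private lemma pick' (N m k l₀ : ℕ) (hl₀ : l₀ < N) (hd : N ∣ (m + k + l₀)) :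
    ∑ l ∈ range N, (l : ℂ) * (if N ∣ (m + k + l) then (N : ℂ) else 0)
      = (N : ℂ) * (l₀ : ℂ) := by
  rw [Finset.sum_eq_single_of_mem l₀ (Finset.mem_range.mpr hl₀)]
  · rw [if_pos hd]; ring
  · intro l hl hne
    rw [Finset.mem_range] at hl
    rw [if_neg, mul_zero]
    intro hd'
    rcases Nat.lt_or_ge l l₀ with h | h
    · have h1 : N ∣ l₀ - l := by
        have := Nat.dvd_sub hd hd'
        simpa [Nat.add_sub_add_left] using this
      have := Nat.le_of_dvd (by omega) h1
      omega
    · have h1 : N ∣ l - l₀ := by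
        have := Nat.dvd_sub hd' hd
        simpa [Nat.add_sub_add_left] using this
      have h2 : l - l₀ = 0 ∨ N ≤ l - l₀ := by
        rcases Nat.eq_zero_or_pos (l - l₀) with h' | h'
        · exact Or.inl h'
        · exact Or.inr (Nat.le_of_dvd h' h1)
      omega

private lemma Usum' (N : ℕ) (hN : 0 < N) (ζ : ℂ) (h : IsPrimitiveRoot ζ N) (m : ℕ) :
    ∑ j ∈ Icc 1 (N - 1), (ζ ^ m) ^ j * (∑ k ∈ range N, (k : ℂ) * (ζ ^ j) ^ k) ^ 2
      = (∑ k ∈ range N, (k : ℂ) *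
          ∑ l ∈ range N, (l : ℂ) * (if N ∣ (m + k + l) then (N : ℂ) else 0))
        - (∑ k ∈ range N, (k : ℂ)) ^ 2 := by
  have step1 : ∀ j : ℕ, (ζ ^ m) ^ j * (∑ k ∈ range N, (k : ℂ) * (ζ ^ j) ^ k) ^ 2
      = ∑ k ∈ range N, ∑ l ∈ range N, (k : ℂ) * (l : ℂ) * (ζ ^ (m + k + l)) ^ j := by
    intro j
    rw [sq, Finset.sum_mul_sum, Finset.mul_sum]
    refine Finset.sum_congr rfl fun k _ => ?_
    rw [Finset.mul_sum]
    refine Finset.sum_congr rfl fun l _ => ?_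
    rw [← pow_mul ζ m j, ← pow_mul ζ j k, ← pow_mul ζ j l, ← pow_mul ζ (m + k + l) j]
    have hexp : ζ ^ (m * j) * (ζ ^ (j * k)) * ζ ^ (j * l) = ζ ^ ((m + k + l) * j) := by
      rw [← pow_add, ← pow_add]; congr 1; ring
    linear_combination (k : ℂ) * (l : ℂ) * hexp
  rw [Finset.sum_congr rfl fun j _ => step1 j]
  rw [Finset.sum_comm]
  have step2 : ∀ k : ℕ, ∑ j ∈ Icc 1 (N - 1), ∑ l ∈ range N,
      (k : ℂ) * (l : ℂ) * (ζ ^ (m + k + l)) ^ j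
      = ∑ l ∈ range N, ((k : ℂ) * (l : ℂ) * (if N ∣ (m + k + l) then (N : ℂ) else 0)
          - (k : ℂ) * (l : ℂ)) := by
    intro k
    rw [Finset.sum_comm]
    refine Finset.sum_congr rfl fun l _ => ?_
    rw [← Finset.mul_sum]
    have hIcc : ∑ j ∈ Icc 1 (N - 1), (ζ ^ (m + k + l)) ^ j
        = (∑ j ∈ range N, (ζ ^ (m + k + l)) ^ j) - 1 := by
      have h1 : Icc 1 (N - 1) = Ico 1 N := by
        rw [← Finset.Ico_add_one_right_eq_Icc]
        congr 1
        omega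
      have h2 : range N = Ico 0 N := by rw [Finset.range_eq_Ico]
      have h3 := Finset.sum_Ico_consecutive (fun j => (ζ ^ (m + k + l)) ^ j)
        (Nat.zero_le 1) hN
      rw [h1, h2, ← h3]
      simp
    rw [hIcc, csum' N (m + k + l) ζ h]
    ring
  rw [Finset.sum_congr rfl fun k _ => step2 k]
  have expand : ∀ k : ℕ,
      ∑ l ∈ range N, ((k : ℂ) * (l : ℂ) * (if N ∣ (m + k + l) then (N : ℂ) else 0)
          - (k : ℂ) * (l : ℂ))
      = (k : ℂ) * (∑ l ∈ range N, (l : ℂ) * (if N ∣ (m + k + l) then (N : ℂ) else 0))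
        - (k : ℂ) * ∑ l ∈ range N, (l : ℂ) := by
    intro k
    rw [Finset.sum_sub_distrib, Finset.mul_sum, Finset.mul_sum]
    congr 1
    refine Finset.sum_congr rfl fun l _ => ?_
    ring
  rw [Finset.sum_congr rfl fun k _ => expand k, Finset.sum_sub_distrib]
  congr 1
  rw [sq, ← Finset.sum_mul]

private lemma D1' (N : ℕ) :
    ∑ k ∈ range N, (k:ℂ) * ∑ l ∈ range N, (l:ℂ) * (if N ∣ (1 + k + l) then (N:ℂ) else 0)
      = (N:ℂ) * (((N:ℂ)-1) * ((N:ℂ)*((N:ℂ)-1)/2) - (N:ℂ)*((N:ℂ)-1)*(2*(N:ℂ)-1)/6) := by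
  have hstep : ∀ k ∈ range N, (k:ℂ) * ∑ l ∈ range N, (l:ℂ) * (if N ∣ (1 + k + l) then (N:ℂ) else 0)
      = (N:ℂ)*(((N:ℂ)-1)*(k:ℂ)) - (N:ℂ)*(k:ℂ)^2 := by
    intro k hk
    rw [Finset.mem_range] at hk
    rw [pick' N 1 k (N-1-k) (by omega) (by rw [show 1+k+(N-1-k) = N by omega])]
    rw [Nat.sub_sub, Nat.cast_sub (by omega : 1+k ≤ N)]
    push_cast
    ring
  rw [Finset.sum_congr rfl hstep, Finset.sum_sub_distrib, ← Finset.mul_sum, ← Finset.mul_sum,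
    ← Finset.mul_sum, lin_sum', sq_sum']
  ring

private lemma D2' (n : ℕ) (hn : 1 ≤ n) :
    ∑ k ∈ range (2*n), (k:ℂ) *
        ∑ l ∈ range (2*n), (l:ℂ) * (if 2*n ∣ (n + 1 + k + l) then ((2*n : ℕ):ℂ) else 0)
      = 2*(n:ℂ) * (2*(((n:ℂ)-1) * ((n:ℂ)*((n:ℂ)-1)/2) - (n:ℂ)*((n:ℂ)-1)*(2*(n:ℂ)-1)/6)
          + (n:ℂ)^2*(2*(n:ℂ)-1)) := by
  have hsplit : ∀ f : ℕ → ℂ, ∑ k ∈ range (2*n), f k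
      = ∑ k ∈ range n, f k + ∑ k ∈ range n, f (n+k) := by
    intro f
    rw [show 2*n = n+n by ring, Finset.sum_range_add]
  rw [hsplit]
  have h1 : ∀ k ∈ range n, (k:ℂ) *
      ∑ l ∈ range (2*n), (l:ℂ) * (if 2*n ∣ (n + 1 + k + l) then ((2*n : ℕ):ℂ) else 0)
      = 2*(n:ℂ)*(((n:ℂ)-1)*(k:ℂ)) - 2*(n:ℂ)*(k:ℂ)^2 := by
    intro k hk
    rw [Finset.mem_range] at hk
    rw [pick' (2*n) (n+1) k (n-1-k) (by omega)
      (by rw [show n+1+k+(n-1-k) = 2*n by omega])]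
    rw [Nat.sub_sub, Nat.cast_sub (by omega : 1+k ≤ n)]
    push_cast
    ring
  have h2 : ∀ t ∈ range n, ((n+t : ℕ):ℂ) *
      ∑ l ∈ range (2*n), (l:ℂ) * (if 2*n ∣ (n + 1 + (n+t) + l) then ((2*n : ℕ):ℂ) else 0)
      = 2*(n:ℂ)*((n:ℂ)*(2*(n:ℂ)-1)) + 2*(n:ℂ)*(((n:ℂ)-1)*(t:ℂ)) - 2*(n:ℂ)*(t:ℂ)^2 := by
    intro t ht
    rw [Finset.mem_range] at ht
    rw [pick' (2*n) (n+1) (n+t) (2*n-1-t) (by omega)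
      (by rw [show n+1+(n+t)+(2*n-1-t) = 2*n*2 by omega]; exact dvd_mul_right _ _)]
    rw [Nat.sub_sub, Nat.cast_sub (by omega : 1+t ≤ 2*n)]
    push_cast
    ring
  rw [Finset.sum_congr rfl h1, Finset.sum_congr rfl h2]
  simp only [Finset.sum_sub_distrib, Finset.sum_add_distrib, ← Finset.mul_sum,
    Finset.sum_const, Finset.card_range, lin_sum', sq_sum', nsmul_eq_mul]
  ring

/-- For `n ≥ 1` and `ζ = exp(πi/n)`:
`-(1/2)(1/(2n)) ∑_{j=1}^{2n-1} ζ^{(n-1)j}/(1-ζ^{-j})²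
  + (1/8)(1/(4n))(∑_{j=1}^{2n-1} (1+ζ^{-j})(1+ζ^{j})/((1-ζ^{-j})(1-ζ^{j})) + 2n) = 0`,
i.e. `δ(Y(n), s_{u,1}) = 0`. -/
theorem delta_prism_v1 (n : ℕ) (hn : 1 ≤ n) (ζ : ℂ)
    (hζ : ζ = Complex.exp (Real.pi * Complex.I / n)) :
    -(1 / 2) * ((1 / (2 * (n : ℂ))) *
        (∑ j ∈ Finset.Icc 1 (2 * n - 1), ζ ^ ((n - 1) * j) / (1 - ζ ^ (-(j : ℤ))) ^ 2)) +
      (1 / 8) * (1 / (4 * (n : ℂ))) *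
        ((∑ j ∈ Finset.Icc 1 (2 * n - 1),
          (1 + ζ ^ (-(j : ℤ))) * (1 + ζ ^ (j : ℤ)) /
            ((1 - ζ ^ (-(j : ℤ))) * (1 - ζ ^ (j : ℤ)))) + 2 * (n : ℂ)) = 0 := by
  have hn0 : (n:ℂ) ≠ 0 := Nat.cast_ne_zero.mpr (by omega)
  have hNC : ((2*n : ℕ) : ℂ) = 2*(n:ℂ) := by push_cast; ring
  have hprim : IsPrimitiveRoot ζ (2*n) := by
    have h := Complex.isPrimitiveRoot_exp (2*n) (by omega)
    have harg : 2 * (Real.pi : ℂ) * Complex.I / ((2*n : ℕ) : ℂ)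
        = (Real.pi : ℂ) * Complex.I / (n : ℂ) := by
      rw [hNC]
      field_simp
    rwa [harg, ← hζ] at h
  have hz0 : ζ ≠ 0 := by rw [hζ]; exact Complex.exp_ne_zero _
  have hne1 : ∀ j, 1 ≤ j → j ≤ 2*n-1 → ζ^j ≠ 1 := fun j h1 h2 =>
    hprim.pow_ne_one_of_pos_of_lt (by omega) (by omega)
  have hzN : ∀ j : ℕ, (ζ^j)^(2*n) = 1 := by
    intro j
    rw [← pow_mul, mul_comm, pow_mul, hprim.pow_eq_one, one_pow]
  have hgs : ∀ j, 1 ≤ j → j ≤ 2*n-1 →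
      (ζ^j - 1) * ∑ k ∈ range (2*n), (k:ℂ) * (ζ^j)^k = 2*(n:ℂ) := by
    intro j h1 h2
    rw [gs_eq' (ζ^j) (2*n) (hne1 j h1 h2) (hzN j), hNC]
  -- termwise rewriting of the first sum
  have hterm1 : ∀ j ∈ Icc 1 (2*n-1),
      ζ^((n-1)*j) / (1 - ζ^(-(j:ℤ)))^2
        = (ζ^(n+1))^j * (∑ k ∈ range (2*n), (k:ℂ) * (ζ^j)^k)^2 / (2*(n:ℂ))^2 := by
    intro j hj
    rw [Finset.mem_Icc] at hj
    have hx1 : ζ^j ≠ 1 := hne1 j hj.1 hj.2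
    have hx0 : ζ^j ≠ 0 := pow_ne_zero _ hz0
    have hg := hgs j hj.1 hj.2
    have hxm1 : ζ^j - 1 ≠ 0 := sub_ne_zero.mpr hx1
    have hgne : (∑ k ∈ range (2*n), (k:ℂ) * (ζ^j)^k) ≠ 0 := by
      intro h0
      rw [h0, mul_zero] at hg
      exact (mul_ne_zero two_ne_zero hn0) hg.symm
    have h1x : (1 : ℂ) - (ζ^j)⁻¹ ≠ 0 := by
      intro h
      apply hx1
      rwa [sub_eq_zero, eq_comm, inv_eq_one] at h
    rw [← hg]
    rw [zpow_neg, zpow_natCast]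
    rw [show ζ^((n-1)*j) = (ζ^j)^(n-1) by rw [mul_comm, pow_mul]]
    rw [show (ζ^(n+1))^j = (ζ^j)^(n+1) by rw [← pow_mul, mul_comm, pow_mul]]
    rw [show (ζ^j)^(n+1) = (ζ^j)^(n-1) * (ζ^j)^2 by rw [← pow_add]; congr 1; omega]
    field_simp
  -- termwise rewriting of the second sum
  have hterm2 : ∀ j ∈ Icc 1 (2*n-1),
      (1 + ζ^(-(j:ℤ))) * (1 + ζ^(j:ℤ)) / ((1 - ζ^(-(j:ℤ))) * (1 - ζ^(j:ℤ)))
        = -1 + (-(4/(2*(n:ℂ))^2)) *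
            ((ζ^1)^j * (∑ k ∈ range (2*n), (k:ℂ) * (ζ^j)^k)^2) := by
    intro j hj
    rw [Finset.mem_Icc] at hj
    have hx1 : ζ^j ≠ 1 := hne1 j hj.1 hj.2
    have hx0 : ζ^j ≠ 0 := pow_ne_zero _ hz0
    have hg := hgs j hj.1 hj.2
    have hxm1 : ζ^j - 1 ≠ 0 := sub_ne_zero.mpr hx1
    have hgne : (∑ k ∈ range (2*n), (k:ℂ) * (ζ^j)^k) ≠ 0 := by
      intro h0
      rw [h0, mul_zero] at hg
      exact (mul_ne_zero two_ne_zero hn0) hg.symm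
    have h1x : (1 : ℂ) - (ζ^j)⁻¹ ≠ 0 := by
      intro h
      apply hx1
      rwa [sub_eq_zero, eq_comm, inv_eq_one] at h
    have h1x' : (1 : ℂ) - ζ^j ≠ 0 := by
      intro h
      apply hx1
      rwa [sub_eq_zero, eq_comm] at h
    rw [← hg]
    rw [zpow_neg, zpow_natCast, pow_one]
    field_simp
    ring
  have hU1 := Usum' (2*n) (by omega) ζ hprim (n+1)
  have hU2 := Usum' (2*n) (by omega) ζ hprim 1
  have hS1 : ∑ j ∈ Icc 1 (2*n-1), ζ^((n-1)*j) / (1 - ζ^(-(j:ℤ)))^2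
      = (2*(n:ℂ)^2+1)/12 := by
    rw [Finset.sum_congr rfl hterm1, ← Finset.sum_div, hU1, D2' n hn, lin_sum']
    push_cast
    field_simp
    ring
  have hS2 : ∑ j ∈ Icc 1 (2*n-1),
      (1 + ζ^(-(j:ℤ))) * (1 + ζ^(j:ℤ)) / ((1 - ζ^(-(j:ℤ))) * (1 - ζ^(j:ℤ)))
      = (4*(n:ℂ)^2 - 6*(n:ℂ) + 2)/3 := by
    rw [Finset.sum_congr rfl hterm2, Finset.sum_add_distrib, Finset.sum_const,
      ← Finset.mul_sum, hU2, D1' (2*n), lin_sum', Nat.card_Icc]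
    rw [show 2*n-1+1-1 = 2*n-1 by omega, nsmul_eq_mul, Nat.cast_sub (by omega : 1 ≤ 2*n)]
    push_cast
    field_simp
    ring
  rw [hS1, hS2]
  field_simp
  ring
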